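/- Let α ∈ [0,1] and λ₀, λ₁ ∈ [1/2,1]. In ℂ², let |0⟩, |1⟩ be the standard basis, |+⟩ = (|0⟩+|1⟩)/√2, |−⟩ = (|0⟩−|1⟩)/√2. Define Kraus operators K⁰₀ = √λ₀|0⟩⟨0| + √(1−λ₀)|1⟩⟨1|, K⁰₁ = √(1−λ₀)|0⟩⟨0| + √λ₀|1⟩⟨1|, K¹₀ = √λ₁|+⟩⟨+| + √(1−λ₁)|−⟩⟨−|, K¹₁ = √(1−λ₁)|+⟩⟨+| + √λ₁|−⟩⟨−|, and Charlie's effects C⁰₀ = |0⟩⟨0|, C⁰₁ = |1⟩⟨1|, C¹₀ = |+⟩⟨+|, C¹₁ = |−⟩⟨−|. Then the maximum over all choices of qubit states ρ_x, x ∈ {0,1}², of P = (α/8)·Σ_{x,y} tr(K^y_{x_y} ρ_x (K^y_{x_y})†) + ((1−α)/16)·Σ_{x,y,z,b} tr(K^y_b ρ_x (K^y_b)† C^z_{x_z}) equals 1/2 + (1/4)·√((1−3α)²/2 + F(λ₀,λ₁)), where F(λ₀,λ₁) = (1−α)(1−3α)(√(λ₁(1−λ₁)) + √(λ₀(1−λ₀)))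 − (1+α)(1−3α)(λ₀² + λ₁²) + 4α(1−α)(√(λ₀(1−λ₀))·λ₁ + λ₀·√(λ₁(1−λ₁))) + (1−5α²)(λ₀ + λ₁). -/

import Mathlib

open Matrix
open scoped ComplexOrder

noncomputable section

abbrev Mat2 := Matrix (Fin 2) (Fin 2) ℂ

/-- A qubit state: a positive semidefinite 2×2 complex matrix with unit trace. -/
def IsQubitState (ρ : Mat2) : Prop := ρ.PosSemidef ∧ ρ.trace = 1

/-- The `y`-th bit of the pair `(x₀, x₁)`. -/
def sel (x₀ x₁ y : Fin 2) : Fin 2 := if y = 0 then x₀ else x₁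

/-- The rank-one projection (outer product) `|v⟩⟨v|`. -/
def proj (v : Fin 2 → ℂ) : Mat2 := vecMulVec v (star v)

def ket0 : Fin 2 → ℂ := ![1, 0]
def ket1 : Fin 2 → ℂ := ![0, 1]
def ketP : Fin 2 → ℂ := ![1 / (Real.sqrt 2 : ℂ), 1 / (Real.sqrt 2 : ℂ)]
def ketM : Fin 2 → ℂ := ![1 / (Real.sqrt 2 : ℂ), -(1 / (Real.sqrt 2 : ℂ))]

/-- The basis used by Bob's instrument `y` and Charlie's measurement `z`:
the computational basis for index `0` and the `±` basis for index `1`. -/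
def bas (y j : Fin 2) : Fin 2 → ℂ :=
  if y = 0 then (if j = 0 then ket0 else ket1) else (if j = 0 then ketP else ketM)

/-- Bob's Kraus operators with sharpness `l`:
`K^y_0 = √l |bas y 0⟩⟨bas y 0| + √(1−l) |bas y 1⟩⟨bas y 1|` and `K^y_1` with
`l` and `1−l` interchanged. -/
def Kg (l : ℝ) (y b : Fin 2) : Mat2 :=
  (Real.sqrt (if b = 0 then l else 1 - l) : ℂ) • proj (bas y 0) +
    (Real.sqrt (if b = 0 then 1 - l else l) : ℂ) • proj (bas y 1)

/-- Charlie's measurement effects: `C⁰₀ = |0⟩⟨0|`, `C⁰₁ = |1⟩⟨1|`, `C¹₀ = |+⟩⟨+|`,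
`C¹₁ = |−⟩⟨−|`. -/
def Cm (z c : Fin 2) : Mat2 := proj (bas z c)

/-- The function `F(λ₀,λ₁)` of Eq. (C2). -/
def Ffun (α l₀ l₁ : ℝ) : ℝ :=
  (1 - α) * (1 - 3 * α) * (Real.sqrt (l₁ * (1 - l₁)) + Real.sqrt (l₀ * (1 - l₀)))
    - (1 + α) * (1 - 3 * α) * (l₀ ^ 2 + l₁ ^ 2)
    + 4 * α * (1 - α) * (Real.sqrt (l₀ * (1 - l₀)) * l₁ + l₀ * Real.sqrt (l₁ * (1 - l₁)))
    + (1 - 5 * α ^ 2) * (l₀ + l₁)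

namespace SPGS

lemma inv_sqrt2_sq : ((Real.sqrt 2 : ℂ))⁻¹ * ((Real.sqrt 2:ℂ))⁻¹ = 2⁻¹ := by
  rw [← mul_inv, ← Complex.ofReal_mul, Real.mul_self_sqrt (by norm_num : (0:ℝ) ≤ 2)]
  norm_num
lemma proj00 : proj (bas 0 0) = !![1,0;0,0] := by
  ext i j; fin_cases i <;> fin_cases j <;> simp [proj, bas, ket0, vecMulVec_apply]
lemma proj01 : proj (bas 0 1) = !![0,0;0,1] := by
  ext i j; fin_cases i <;> fin_cases j <;> simp [proj, bas, ket1, vecMulVec_apply]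
lemma proj10 : proj (bas 1 0) = !![1/2,1/2;1/2,1/2] := by
  ext i j; fin_cases i <;> fin_cases j <;> simp [proj, bas, ketP, vecMulVec_apply, inv_sqrt2_sq]
lemma proj11 : proj (bas 1 1) = !![1/2,-(1/2);-(1/2),1/2] := by
  ext i j; fin_cases i <;> fin_cases j <;> simp [proj, bas, ketM, vecMulVec_apply, inv_sqrt2_sq]

lemma trK (k00 k01 k10 k11 : ℝ) (ρ : Mat2) :
    ((!![(k00:ℂ),k01;k10,k11] * ρ * (!![(k00:ℂ),k01;k10,k11])ᴴ).trace).re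
    = (k00^2+k10^2) * (ρ 0 0).re + (k00*k01+k10*k11) * ((ρ 0 1).re + (ρ 1 0).re)
      + (k01^2+k11^2) * (ρ 1 1).re := by
  simp [Matrix.trace_fin_two, Matrix.mul_apply, Fin.sum_univ_two, Matrix.conjTranspose_apply,
    Matrix.vecMul, dotProduct, Matrix.vecHead, Matrix.vecTail,
    Complex.add_re, Complex.mul_re, Complex.add_im, Complex.mul_im]
  ring
lemma trKK (k00 k01 k10 k11 c00 c01 c10 c11 : ℝ) (ρ : Mat2) :
    ((!![(k00:ℂ),k01;k10,k11] * ρ * (!![(k00:ℂ),k01;k10,k11])ᴴ * !![(c00:ℂ),c01;c10,c11]).trace).re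
    = (k00^2*c00 + k00*k10*(c01+c10) + k10^2*c11) * (ρ 0 0).re
      + (k01*k00*c00 + k01*k10*c01 + k11*k00*c10 + k11*k10*c11) * (ρ 0 1).re
      + (k00*k01*c00 + k00*k11*c01 + k10*k01*c10 + k10*k11*c11) * (ρ 1 0).re
      + (k01^2*c00 + k01*k11*(c01+c10) + k11^2*c11) * (ρ 1 1).re := by
  simp [Matrix.trace_fin_two, Matrix.mul_apply, Fin.sum_univ_two, Matrix.conjTranspose_apply,
    Matrix.vecMul, dotProduct, Matrix.vecHead, Matrix.vecTail,
    Complex.add_re, Complex.mul_re, Complex.add_im, Complex.mul_im]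
  ring

lemma Kg00 (l : ℝ) : Kg l 0 0 = !![((Real.sqrt l : ℝ):ℂ), ((0:ℝ):ℂ); ((0:ℝ):ℂ), ((Real.sqrt (1-l) : ℝ):ℂ)] := by
  rw [Kg, proj00, proj01]; ext i j; fin_cases i <;> fin_cases j <;> simp
lemma Kg01 (l : ℝ) : Kg l 0 1 = !![((Real.sqrt (1-l) : ℝ):ℂ), ((0:ℝ):ℂ); ((0:ℝ):ℂ), ((Real.sqrt l : ℝ):ℂ)] := by
  rw [Kg, proj00, proj01]; ext i j; fin_cases i <;> fin_cases j <;> simp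
lemma Kg10 (l : ℝ) : Kg l 1 0 =
    !![(((Real.sqrt l + Real.sqrt (1-l))/2 : ℝ):ℂ), (((Real.sqrt l - Real.sqrt (1-l))/2 : ℝ):ℂ);
       (((Real.sqrt l - Real.sqrt (1-l))/2 : ℝ):ℂ), (((Real.sqrt l + Real.sqrt (1-l))/2 : ℝ):ℂ)] := by
  rw [Kg, proj10, proj11]; ext i j; fin_cases i <;> fin_cases j <;>
    · simp; push_cast; ring
lemma Kg11 (l : ℝ) : Kg l 1 1 =
    !![(((Real.sqrt (1-l) + Real.sqrt l)/2 : ℝ):ℂ), (((Real.sqrt (1-l) - Real.sqrt l)/2 : ℝ):ℂ);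
       (((Real.sqrt (1-l) - Real.sqrt l)/2 : ℝ):ℂ), (((Real.sqrt (1-l) + Real.sqrt l)/2 : ℝ):ℂ)] := by
  rw [Kg, proj10, proj11]; ext i j; fin_cases i <;> fin_cases j <;>
    · simp; push_cast; ring
lemma Cm00 : Cm 0 0 = !![((1:ℝ):ℂ), ((0:ℝ):ℂ); ((0:ℝ):ℂ), ((0:ℝ):ℂ)] := by
  rw [Cm, proj00]; norm_num
lemma Cm01 : Cm 0 1 = !![((0:ℝ):ℂ), ((0:ℝ):ℂ); ((0:ℝ):ℂ), ((1:ℝ):ℂ)] := by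
  rw [Cm, proj01]; norm_num
lemma Cm10 : Cm 1 0 = !![((1/2:ℝ):ℂ), ((1/2:ℝ):ℂ); ((1/2:ℝ):ℂ), ((1/2:ℝ):ℂ)] := by
  rw [Cm, proj10]; norm_num
lemma Cm11 : Cm 1 1 = !![((1/2:ℝ):ℂ), ((-(1/2):ℝ):ℂ); ((-(1/2):ℝ):ℂ), ((1/2:ℝ):ℂ)] := by
  rw [Cm, proj11]; norm_num

def sg (i : Fin 2) : ℝ := if i = 0 then 1 else -1
def bB (α l₀ l₁ : ℝ) : ℝ :=
  α*((Real.sqrt l₀)^2-(Real.sqrt (1-l₀))^2)/16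
    + (1-α)*((Real.sqrt l₀)^2+(Real.sqrt (1-l₀))^2+2*Real.sqrt l₁*Real.sqrt (1-l₁))/32
def cB (α l₀ l₁ : ℝ) : ℝ :=
  α*((Real.sqrt l₁)^2-(Real.sqrt (1-l₁))^2)/16
    + (1-α)*((Real.sqrt l₁)^2+(Real.sqrt (1-l₁))^2+2*Real.sqrt l₀*Real.sqrt (1-l₀))/32
def tT (l₀ l₁ : ℝ) : ℝ :=
  ((Real.sqrt l₀)^2+(Real.sqrt (1-l₀))^2+(Real.sqrt l₁)^2+(Real.sqrt (1-l₁))^2)/16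

lemma sg_sq (x : Fin 2) : sg x ^ 2 = 1 := by fin_cases x <;> norm_num [sg]

lemma expand (α l₀ l₁ : ℝ) (x₀ x₁ : Fin 2) (ρ : Mat2) :
    α / 8 * ∑ y : Fin 2,
        ((Kg (if y = 0 then l₀ else l₁) y (sel x₀ x₁ y) * ρ *
            (Kg (if y = 0 then l₀ else l₁) y (sel x₀ x₁ y))ᴴ).trace).re
      + (1 - α) / 16 * ∑ y : Fin 2, ∑ z : Fin 2, ∑ b : Fin 2,
          ((Kg (if y = 0 then l₀ else l₁) y b * ρ *
              (Kg (if y = 0 then l₀ else l₁) y b)ᴴ * Cm z (sel x₀ x₁ z)).trace).re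
    = tT l₀ l₁ * ((ρ 0 0).re + (ρ 1 1).re)
      + sg x₀ * bB α l₀ l₁ * ((ρ 0 0).re - (ρ 1 1).re)
      + sg x₁ * cB α l₀ l₁ * ((ρ 0 1).re + (ρ 1 0).re) := by
  fin_cases x₀ <;> fin_cases x₁ <;>
  · simp only [Fin.mk_zero, Fin.mk_one, sel, Fin.sum_univ_two, Fin.reduceEq, reduceIte]
    simp only [Kg00, Kg01, Kg10, Kg11, Cm00, Cm01, Cm10, Cm11]
    simp only [trK, trKK]
    simp only [sg, bB, cB, tT, Fin.mk_zero, Fin.mk_one, Fin.reduceEq, reduceIte]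
    ring

lemma qubit_facts (ρ : Mat2) (h : IsQubitState ρ) :
    (ρ 0 0).re + (ρ 1 1).re = 1 ∧ (ρ 1 0).re = (ρ 0 1).re ∧
      ((ρ 0 0).re - (ρ 1 1).re)^2 + ((ρ 0 1).re + (ρ 1 0).re)^2 ≤ 1 := by
  obtain ⟨hpsd, htr⟩ := h
  obtain ⟨hherm, hpos⟩ := Matrix.posSemidef_iff_dotProduct_mulVec.mp hpsd
  have h10 : ρ 1 0 = star (ρ 0 1) := by
    have := congrFun (congrFun hherm 1) 0
    simpa [Matrix.conjTranspose_apply] using this.symm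
  have h00 : (0:ℂ) ≤ ρ 0 0 := by
    have := hpos ![1, 0]
    simpa [dotProduct, Matrix.mulVec, Fin.sum_univ_two] using this
  have h11 : (0:ℂ) ≤ ρ 1 1 := by
    have := hpos ![0, 1]
    simpa [dotProduct, Matrix.mulVec, Fin.sum_univ_two] using this
  have h00re : 0 ≤ (ρ 0 0).re := (Complex.le_def.mp h00).1
  have h00im : (ρ 0 0).im = 0 := ((Complex.le_def.mp h00).2).symm
  have h11re : 0 ≤ (ρ 1 1).re := (Complex.le_def.mp h11).1
  have h11im : (ρ 1 1).im = 0 := ((Complex.le_def.mp h11).2).symm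
  have htr' : (ρ 0 0).re + (ρ 1 1).re = 1 := by
    have := congrArg Complex.re htr
    simpa [Matrix.trace_fin_two, Complex.add_re] using this
  set p := (ρ 0 0).re
  set q := (ρ 1 1).re
  set w2 := (ρ 0 1).re^2 + (ρ 0 1).im^2 with hw2
  have hkey : ∀ t : ℝ, 0 ≤ (p*w2)*(t*t) + (-2*w2)*t + q := by
    intro t
    have hq := hpos ![(t:ℂ) * ρ 0 1, -1]
    have h1 : (0:ℝ) ≤ (dotProduct (star ![(t:ℂ) * ρ 0 1, -1])
        (ρ.mulVec ![(t:ℂ) * ρ 0 1, -1])).re := by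
      simpa using (Complex.le_def.mp hq).1
    have h2 : (dotProduct (star ![(t:ℂ) * ρ 0 1, -1])
        (ρ.mulVec ![(t:ℂ) * ρ 0 1, -1])).re = (p*w2)*(t*t) + (-2*w2)*t + q := by
      simp [dotProduct, Matrix.mulVec, Fin.sum_univ_two, h10,
        Complex.add_re, Complex.mul_re, Complex.add_im, Complex.mul_im, h00im, h11im]
      ring
    linarith [h2 ▸ h1]
  have hdisc := discrim_le_zero hkey
  rw [discrim] at hdisc
  have hw2pq : w2 ≤ p * q := by
    have hw2nn : 0 ≤ w2 := by positivity
    nlinarith [mul_nonneg h00re h11re]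
  refine ⟨htr', by simp [h10], ?_⟩
  have hre : (ρ 1 0).re = (ρ 0 1).re := by simp [h10]
  rw [hre]
  nlinarith [sq_nonneg (ρ 0 1).im]

lemma psd2 (p q w : ℝ) (hp : 0 ≤ p) (hq : 0 ≤ q) (hw : w^2 ≤ p*q) :
    Matrix.PosSemidef !![(p:ℂ), (w:ℂ); (w:ℂ), (q:ℂ)] := by
  refine Matrix.PosSemidef.of_dotProduct_mulVec_nonneg ?_ ?_
  · ext i j
    fin_cases i <;> fin_cases j <;>
      simp [Matrix.conjTranspose_apply, Complex.conj_ofReal]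
  · intro x
    rw [Complex.le_def]
    constructor
    · have him : (dotProduct (star x)
          ((!![(p:ℂ), (w:ℂ); (w:ℂ), (q:ℂ)]).mulVec x)).re
          = p*((x 0).re^2+(x 0).im^2) + q*((x 1).re^2+(x 1).im^2)
            + 2*w*((x 0).re*(x 1).re + (x 0).im*(x 1).im) := by
        simp [dotProduct, Matrix.mulVec, Fin.sum_univ_two,
          Complex.add_re, Complex.mul_re, Complex.add_im, Complex.mul_im]
        ring
      rw [Complex.zero_re, him]
      by_cases hq0 : q = 0
      · have hw0 : w = 0 := by nlinarith
        subst hq0 hw0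
        nlinarith [mul_nonneg hp (by positivity : (0:ℝ) ≤ (x 0).re^2+(x 0).im^2)]
      · have hqpos : 0 < q := lt_of_le_of_ne hq (Ne.symm hq0)
        nlinarith [sq_nonneg (w*(x 0).re + q*(x 1).re), sq_nonneg (w*(x 0).im + q*(x 1).im),
          mul_nonneg (by nlinarith : (0:ℝ) ≤ p*q - w^2)
            (by positivity : (0:ℝ) ≤ (x 0).re^2+(x 0).im^2)]
    · simp [dotProduct, Matrix.mulVec, Fin.sum_univ_two,
        Complex.add_im, Complex.mul_im, Complex.add_re, Complex.mul_re]
      ring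

lemma cs_bound (X Y u v : ℝ) (h : u^2 + v^2 ≤ 1) : X*u + Y*v ≤ Real.sqrt (X^2+Y^2) := by
  have ht2 : (X*u+Y*v)^2 ≤ X^2+Y^2 := by nlinarith [sq_nonneg (X*v - Y*u), sq_nonneg (X*u+Y*v)]
  calc X*u+Y*v ≤ |X*u+Y*v| := le_abs_self _
    _ = Real.sqrt ((X*u+Y*v)^2) := (Real.sqrt_sq_eq_abs _).symm
    _ ≤ Real.sqrt (X^2+Y^2) := Real.sqrt_le_sqrt ht2

lemma sqrt_ident (α l₀ l₁ : ℝ) (h0 : 0 ≤ l₀) (h0' : l₀ ≤ 1) (h1 : 0 ≤ l₁) (h1' : l₁ ≤ 1) :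
    Real.sqrt ((1 - 3 * α) ^ 2 / 2 + Ffun α l₀ l₁)
      = 16 * Real.sqrt ((bB α l₀ l₁)^2 + (cB α l₀ l₁)^2) := by
  have e0 : (Real.sqrt l₀)^2 = l₀ := Real.sq_sqrt h0
  have e0' : (Real.sqrt (1-l₀))^2 = 1-l₀ := Real.sq_sqrt (by linarith)
  have e1 : (Real.sqrt l₁)^2 = l₁ := Real.sq_sqrt h1
  have e1' : (Real.sqrt (1-l₁))^2 = 1-l₁ := Real.sq_sqrt (by linarith)
  have hu0 : (Real.sqrt l₀ * Real.sqrt (1-l₀))^2 = l₀*(1-l₀) := by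
    rw [mul_pow, e0, e0']
  have hu1 : (Real.sqrt l₁ * Real.sqrt (1-l₁))^2 = l₁*(1-l₁) := by
    rw [mul_pow, e1, e1']
  have hm0 : Real.sqrt (l₀ * (1-l₀)) = Real.sqrt l₀ * Real.sqrt (1-l₀) := Real.sqrt_mul h0 _
  have hm1 : Real.sqrt (l₁ * (1-l₁)) = Real.sqrt l₁ * Real.sqrt (1-l₁) := Real.sqrt_mul h1 _
  have h256 : (1 - 3 * α) ^ 2 / 2 + Ffun α l₀ l₁
      = 256 * ((bB α l₀ l₁)^2 + (cB α l₀ l₁)^2) := by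
    rw [Ffun, bB, cB, hm0, hm1, e0, e0', e1, e1']
    linear_combination (-(1-α)^2) * hu0 + (-(1-α)^2) * hu1
  rw [h256, show (256:ℝ) = 16^2 by norm_num, Real.sqrt_mul (by positivity),
    Real.sqrt_sq (by norm_num : (0:ℝ) ≤ 16)]

lemma rearrange (c d : ℝ) (A : Fin 2 → Fin 2 → Fin 2 → ℝ)
    (B : Fin 2 → Fin 2 → Fin 2 → Fin 2 → Fin 2 → ℝ) :
    c * (∑ x₀ : Fin 2, ∑ x₁ : Fin 2, ∑ y : Fin 2, A x₀ x₁ y)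
      + d * (∑ x₀ : Fin 2, ∑ x₁ : Fin 2, ∑ y : Fin 2, ∑ z : Fin 2, ∑ b : Fin 2, B x₀ x₁ y z b)
    = ∑ x₀ : Fin 2, ∑ x₁ : Fin 2,
        (c * (∑ y : Fin 2, A x₀ x₁ y) + d * (∑ y : Fin 2, ∑ z : Fin 2, ∑ b : Fin 2, B x₀ x₁ y z b)) := by
  simp only [Fin.sum_univ_two]
  ring

lemma div_facts {B C S : ℝ} (hB : 0 ≤ B) (hC : 0 ≤ C) (hBS : B ≤ S) (hCS : C ≤ S)
    (hS0 : 0 ≤ S) (hS2 : S^2 = B^2+C^2) :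
    ∃ D E : ℝ, 0 ≤ D ∧ D ≤ 1/2 ∧ 0 ≤ E ∧ E ≤ 1/2 ∧ D^2+E^2 ≤ 1/4 ∧ 2*B*D + 2*C*E = S := by
  rcases eq_or_lt_of_le hS0 with h | h
  · have hB' : B = 0 := le_antisymm (h ▸ hBS) hB
    have hC' : C = 0 := le_antisymm (h ▸ hCS) hC
    exact ⟨0, 0, le_refl _, by norm_num, le_refl _, by norm_num, by norm_num,
      by rw [hB', hC', ← h]; ring⟩
  · refine ⟨B/(2*S), C/(2*S), by positivity, ?_, by positivity, ?_, ?_, ?_⟩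
    · rw [div_le_iff₀ (by linarith)]; linarith
    · rw [div_le_iff₀ (by linarith)]; linarith
    · have e : (B/(2*S))^2+(C/(2*S))^2 = (B^2+C^2)/(2*S)^2 := by ring
      rw [e, ← hS2, div_le_iff₀ (by positivity)]
      nlinarith
    · have e : 2*B*(B/(2*S)) + 2*C*(C/(2*S)) = (B^2+C^2)/S := by
        field_simp
      rw [e, ← hS2, sq, mul_div_assoc, div_self h.ne', mul_one]

lemma witness_state (D E : ℝ) (hD0 : 0 ≤ D) (hDh : D ≤ 1/2) (hE0 : 0 ≤ E) (hEh : E ≤ 1/2)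
    (hDE : D^2 + E^2 ≤ 1/4) :
    ∀ x₀ x₁ : Fin 2, IsQubitState
      (!![((1/2 + sg x₀ * D : ℝ):ℂ), ((sg x₁ * E : ℝ):ℂ);
          ((sg x₁ * E : ℝ):ℂ), ((1/2 - sg x₀ * D : ℝ):ℂ)]) := by
  have hsgB : ∀ x : Fin 2, sg x = 1 ∨ sg x = -1 := by
    intro x; fin_cases x <;> simp [sg]
  intro x₀ x₁
  constructor
  · apply psd2
    · rcases hsgB x₀ with h | h <;> rw [h] <;> linarith
    · rcases hsgB x₀ with h | h <;> rw [h] <;> linarith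
    · have h1 : (sg x₁ * E)^2 = E^2 := by rw [mul_pow, sg_sq, one_mul]
      have h2 : (sg x₀ * D)^2 = D^2 := by rw [mul_pow, sg_sq, one_mul]
      rw [h1]
      nlinarith [hDE, h2]
  · rw [Matrix.trace_fin_two]
    have hent : ((1/2 + sg x₀ * D : ℝ):ℂ) + ((1/2 - sg x₀ * D : ℝ):ℂ) = 1 := by
      rw [← Complex.ofReal_add]
      norm_num
    simpa using hent

end SPGS

open SPGS in
set_option maxHeartbeats 2000000 in
/-- Eq. (C2) of the paper: with Bob's Lüders instruments of sharpnesses `λ₀, λ₁` and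
Charlie's fixed measurements, the maximum over Alice's preparations of the average
success probability equals `1/2 + √((1−3α)²/2 + F(λ₀,λ₁))/4`. -/
theorem success_probability_given_sharpness
    (α : ℝ) (hα : α ∈ Set.Icc (0 : ℝ) 1)
    (l₀ l₁ : ℝ) (hl₀ : l₀ ∈ Set.Icc (1 / 2 : ℝ) 1) (hl₁ : l₁ ∈ Set.Icc (1 / 2 : ℝ) 1) :
    IsGreatest
      {r : ℝ | ∃ ρ : Fin 2 → Fin 2 → Mat2, (∀ x₀ x₁, IsQubitState (ρ x₀ x₁)) ∧
        α / 8 * ∑ x₀ : Fin 2, ∑ x₁ : Fin 2, ∑ y : Fin 2,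
            ((Kg (if y = 0 then l₀ else l₁) y (sel x₀ x₁ y) * ρ x₀ x₁ *
                (Kg (if y = 0 then l₀ else l₁) y (sel x₀ x₁ y))ᴴ).trace).re
          + (1 - α) / 16 * ∑ x₀ : Fin 2, ∑ x₁ : Fin 2, ∑ y : Fin 2, ∑ z : Fin 2, ∑ b : Fin 2,
              ((Kg (if y = 0 then l₀ else l₁) y b * ρ x₀ x₁ *
                  (Kg (if y = 0 then l₀ else l₁) y b)ᴴ * Cm z (sel x₀ x₁ z)).trace).re
          = r}
      (1 / 2 + Real.sqrt ((1 - 3 * α) ^ 2 / 2 + Ffun α l₀ l₁) / 4) := by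
  obtain ⟨hα0, hα1⟩ := hα
  obtain ⟨hl₀h, hl₀1⟩ := hl₀
  obtain ⟨hl₁h, hl₁1⟩ := hl₁
  have hl₀0 : (0:ℝ) ≤ l₀ := by linarith
  have hl₁0 : (0:ℝ) ≤ l₁ := by linarith
  set B := bB α l₀ l₁ with hBdef
  set C := cB α l₀ l₁ with hCdef
  set S := Real.sqrt (B^2 + C^2) with hSdef
  -- basic sqrt facts
  have hs0n : (0:ℝ) ≤ Real.sqrt l₀ := Real.sqrt_nonneg _
  have ht0n : (0:ℝ) ≤ Real.sqrt (1-l₀) := Real.sqrt_nonneg _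
  have hs1n : (0:ℝ) ≤ Real.sqrt l₁ := Real.sqrt_nonneg _
  have ht1n : (0:ℝ) ≤ Real.sqrt (1-l₁) := Real.sqrt_nonneg _
  have hmon0 : Real.sqrt (1-l₀) ≤ Real.sqrt l₀ := Real.sqrt_le_sqrt (by linarith)
  have hmon1 : Real.sqrt (1-l₁) ≤ Real.sqrt l₁ := Real.sqrt_le_sqrt (by linarith)
  have e0 : (Real.sqrt l₀)^2 = l₀ := Real.sq_sqrt hl₀0
  have e0' : (Real.sqrt (1-l₀))^2 = 1-l₀ := Real.sq_sqrt (by linarith)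
  have e1 : (Real.sqrt l₁)^2 = l₁ := Real.sq_sqrt hl₁0
  have e1' : (Real.sqrt (1-l₁))^2 = 1-l₁ := Real.sq_sqrt (by linarith)
  have hB0 : 0 ≤ B := by
    rw [hBdef, bB]
    have h1 : 0 ≤ α*((Real.sqrt l₀)^2-(Real.sqrt (1-l₀))^2) :=
      mul_nonneg hα0 (by nlinarith)
    have h2 : 0 ≤ (1-α)*((Real.sqrt l₀)^2+(Real.sqrt (1-l₀))^2
        +2*Real.sqrt l₁*Real.sqrt (1-l₁)) :=
      mul_nonneg (by linarith) (by positivity)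
    linarith
  have hC0 : 0 ≤ C := by
    rw [hCdef, cB]
    have h1 : 0 ≤ α*((Real.sqrt l₁)^2-(Real.sqrt (1-l₁))^2) :=
      mul_nonneg hα0 (by nlinarith)
    have h2 : 0 ≤ (1-α)*((Real.sqrt l₁)^2+(Real.sqrt (1-l₁))^2
        +2*Real.sqrt l₀*Real.sqrt (1-l₀)) :=
      mul_nonneg (by linarith) (by positivity)
    linarith
  have hS0 : 0 ≤ S := Real.sqrt_nonneg _
  have hS2 : S^2 = B^2 + C^2 := Real.sq_sqrt (by positivity)
  have hBS : B ≤ S := by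
    have h := Real.sqrt_le_sqrt (show B^2 ≤ B^2+C^2 by nlinarith)
    rwa [Real.sqrt_sq hB0] at h
  have hCS : C ≤ S := by
    have h := Real.sqrt_le_sqrt (show C^2 ≤ B^2+C^2 by nlinarith)
    rwa [Real.sqrt_sq hC0] at h
  have hT : tT l₀ l₁ = 1/8 := by rw [tT, e0, e0', e1, e1']; ring
  have hSI : Real.sqrt ((1 - 3 * α) ^ 2 / 2 + Ffun α l₀ l₁) = 16 * S :=
    sqrt_ident α l₀ l₁ hl₀0 hl₀1 hl₁0 hl₁1
  obtain ⟨D, E, hD0, hDh, hE0, hEh, hDE, hDES⟩ := div_facts hB0 hC0 hBS hCS hS0 hS2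
  clear_value B C S
  -- the witness states
  set ρw : Fin 2 → Fin 2 → Mat2 := fun x₀ x₁ =>
    !![((1/2 + sg x₀ * D : ℝ):ℂ), ((sg x₁ * E : ℝ):ℂ);
       ((sg x₁ * E : ℝ):ℂ), ((1/2 - sg x₀ * D : ℝ):ℂ)] with hρw
  have hsgB : ∀ x : Fin 2, sg x = 1 ∨ sg x = -1 := by
    intro x; fin_cases x <;> simp [sg]
  have hρw_state : ∀ x₀ x₁ : Fin 2, IsQubitState (ρw x₀ x₁) :=
    fun x₀ x₁ => witness_state D E hD0 hDh hE0 hEh hDE x₀ x₁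
  -- total value rewriting
  have htotal : ∀ ρf : Fin 2 → Fin 2 → Mat2,
      (α / 8 * ∑ x₀ : Fin 2, ∑ x₁ : Fin 2, ∑ y : Fin 2,
            ((Kg (if y = 0 then l₀ else l₁) y (sel x₀ x₁ y) * ρf x₀ x₁ *
                (Kg (if y = 0 then l₀ else l₁) y (sel x₀ x₁ y))ᴴ).trace).re
          + (1 - α) / 16 * ∑ x₀ : Fin 2, ∑ x₁ : Fin 2, ∑ y : Fin 2, ∑ z : Fin 2, ∑ b : Fin 2,
              ((Kg (if y = 0 then l₀ else l₁) y b * ρf x₀ x₁ *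
                  (Kg (if y = 0 then l₀ else l₁) y b)ᴴ * Cm z (sel x₀ x₁ z)).trace).re)
      = ∑ x₀ : Fin 2, ∑ x₁ : Fin 2,
          (tT l₀ l₁ * (((ρf x₀ x₁) 0 0).re + ((ρf x₀ x₁) 1 1).re)
            + sg x₀ * B * (((ρf x₀ x₁) 0 0).re - ((ρf x₀ x₁) 1 1).re)
            + sg x₁ * C * (((ρf x₀ x₁) 0 1).re + ((ρf x₀ x₁) 1 0).re)) := by
    intro ρf
    rw [show (α / 8 * ∑ x₀ : Fin 2, ∑ x₁ : Fin 2, ∑ y : Fin 2,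
            ((Kg (if y = 0 then l₀ else l₁) y (sel x₀ x₁ y) * ρf x₀ x₁ *
                (Kg (if y = 0 then l₀ else l₁) y (sel x₀ x₁ y))ᴴ).trace).re
          + (1 - α) / 16 * ∑ x₀ : Fin 2, ∑ x₁ : Fin 2, ∑ y : Fin 2, ∑ z : Fin 2, ∑ b : Fin 2,
              ((Kg (if y = 0 then l₀ else l₁) y b * ρf x₀ x₁ *
                  (Kg (if y = 0 then l₀ else l₁) y b)ᴴ * Cm z (sel x₀ x₁ z)).trace).re)
        = ∑ x₀ : Fin 2, ∑ x₁ : Fin 2,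
          (α / 8 * (∑ y : Fin 2,
            ((Kg (if y = 0 then l₀ else l₁) y (sel x₀ x₁ y) * ρf x₀ x₁ *
                (Kg (if y = 0 then l₀ else l₁) y (sel x₀ x₁ y))ᴴ).trace).re)
          + (1 - α) / 16 * (∑ y : Fin 2, ∑ z : Fin 2, ∑ b : Fin 2,
              ((Kg (if y = 0 then l₀ else l₁) y b * ρf x₀ x₁ *
                  (Kg (if y = 0 then l₀ else l₁) y b)ᴴ * Cm z (sel x₀ x₁ z)).trace).re))
      from rearrange (α/8) ((1-α)/16) _ _]
    refine Finset.sum_congr rfl fun x₀ _ => Finset.sum_congr rfl fun x₁ _ => ?_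
    rw [hBdef, hCdef]
    exact expand α l₀ l₁ x₀ x₁ (ρf x₀ x₁)
  constructor
  · -- membership
    refine ⟨ρw, hρw_state, ?_⟩
    rw [htotal]
    have hval : ∀ x₀ x₁ : Fin 2,
        tT l₀ l₁ * (((ρw x₀ x₁) 0 0).re + ((ρw x₀ x₁) 1 1).re)
          + sg x₀ * B * (((ρw x₀ x₁) 0 0).re - ((ρw x₀ x₁) 1 1).re)
          + sg x₁ * C * (((ρw x₀ x₁) 0 1).re + ((ρw x₀ x₁) 1 0).re)
        = 1/8 + (2*B*D + 2*C*E) := by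
      intro x₀ x₁
      have h1 : ((ρw x₀ x₁) 0 0).re = 1/2 + sg x₀ * D := by rw [hρw]; simp
      have h2 : ((ρw x₀ x₁) 1 1).re = 1/2 - sg x₀ * D := by rw [hρw]; simp
      have h3 : ((ρw x₀ x₁) 0 1).re = sg x₁ * E := by rw [hρw]; simp
      have h4 : ((ρw x₀ x₁) 1 0).re = sg x₁ * E := by rw [hρw]; simp
      rw [h1, h2, h3, h4, hT]
      linear_combination 2*B*D*(sg_sq x₀) + 2*C*E*(sg_sq x₁)
    simp only [Fin.sum_univ_two]
    rw [hval 0 0, hval 0 1, hval 1 0, hval 1 1, hSI, hDES]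
    ring
  · -- upper bound
    rintro r ⟨ρf, hρf, hr⟩
    rw [← hr, htotal]
    have hub : ∀ x₀ x₁ : Fin 2,
        tT l₀ l₁ * (((ρf x₀ x₁) 0 0).re + ((ρf x₀ x₁) 1 1).re)
          + sg x₀ * B * (((ρf x₀ x₁) 0 0).re - ((ρf x₀ x₁) 1 1).re)
          + sg x₁ * C * (((ρf x₀ x₁) 0 1).re + ((ρf x₀ x₁) 1 0).re)
        ≤ 1/8 + S := by
      intro x₀ x₁
      obtain ⟨htr, hsym, hball⟩ := qubit_facts (ρf x₀ x₁) (hρf x₀ x₁)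
      have hcs := cs_bound (sg x₀ * B) (sg x₁ * C)
        (((ρf x₀ x₁) 0 0).re - ((ρf x₀ x₁) 1 1).re)
        (((ρf x₀ x₁) 0 1).re + ((ρf x₀ x₁) 1 0).re) hball
      have hS' : Real.sqrt ((sg x₀ * B)^2 + (sg x₁ * C)^2) = S := by
        rw [mul_pow, mul_pow, sg_sq, sg_sq, one_mul, one_mul]
        exact hSdef.symm
      rw [hS'] at hcs
      rw [hT, htr]
      linarith
    calc ∑ x₀ : Fin 2, ∑ x₁ : Fin 2,
          (tT l₀ l₁ * (((ρf x₀ x₁) 0 0).re + ((ρf x₀ x₁) 1 1).re)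
            + sg x₀ * B * (((ρf x₀ x₁) 0 0).re - ((ρf x₀ x₁) 1 1).re)
            + sg x₁ * C * (((ρf x₀ x₁) 0 1).re + ((ρf x₀ x₁) 1 0).re))
        ≤ ∑ _x₀ : Fin 2, ∑ _x₁ : Fin 2, (1/8 + S) := by
          apply Finset.sum_le_sum; intro x₀ _
          apply Finset.sum_le_sum; intro x₁ _
          exact hub x₀ x₁
      _ = 1/2 + 4*S := by simp only [Fin.sum_univ_two]; ring
      _ = 1 / 2 + Real.sqrt ((1 - 3 * α) ^ 2 / 2 + Ffun α l₀ l₁) / 4 := by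
          rw [hSI]; ring
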